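/- Let S(x) = sin(πx)/(πx) (with S(0)=1). For g(x) = η(x)·det_{n×n}[S(x_i − x_j)] with η Schwartz on ℝ^n, the Fourier transform of g satisfies ĝ(y) = Σ_{σ ∈ 𝔖_n} sgn(σ) ∫_{[−1/2,1/2]^n} η̂(y_1 − (ξ_1 − ξ_{σ^{−1}(1)}), ..., y_n − (ξ_n − ξ_{σ^{−1}(n)})) dξ. -/

import Mathlib

open MeasureTheory Real

/-- The normalized _root_.sinc function `S(x) = sin(πx)/(πx)`, `S(0) = 1`. -/
noncomputable def sinc (x : ℝ) : ℝ := if x = 0 then 1 else Real.sin (π * x) / (π * x)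

lemma measurable_sinc : Measurable _root_.sinc := by
  unfold _root_.sinc
  exact Measurable.ite (measurableSet_eq_fun measurable_id measurable_const)
    measurable_const (by fun_prop)

lemma abs_sinc_le_one (x : ℝ) : |_root_.sinc x| ≤ 1 := by
  unfold _root_.sinc
  split
  · simp
  · rename_i h
    rw [abs_div, div_le_one (by positivity)]
    exact Real.abs_sin_le_abs

lemma sinc_integral (a : ℝ) :
    (∫ t in Set.Icc (-(1:ℝ)/2) (1/2), Complex.exp (2*π*Complex.I*a*t)) = (_root_.sinc a : ℂ) := by
  rw [MeasureTheory.integral_Icc_eq_integral_Ioc,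
    ← intervalIntegral.integral_of_le (by norm_num : -(1:ℝ)/2 ≤ 1/2)]
  rcases eq_or_ne a 0 with rfl | ha
  · norm_num [_root_.sinc]
  · have hπa : (π * a : ℂ) ≠ 0 := by
      simp [Real.pi_ne_zero, Complex.ofReal_ne_zero, ha]
    have hc : (2*π*a*Complex.I : ℂ) ≠ 0 := by
      simp [Real.pi_ne_zero, Complex.I_ne_zero, Complex.ofReal_ne_zero, ha]
    have : ∀ t : ℝ, Complex.exp (2*π*Complex.I*a*t) = Complex.exp ((2*π*a*Complex.I) * t) := by
      intro t; ring_nf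
    simp_rw [this]
    rw [integral_exp_mul_complex hc]
    have h1 : (2*π*a*Complex.I : ℂ) * (1/2 : ℝ) = (↑π * ↑a : ℂ) * Complex.I := by
      push_cast; ring
    have h2 : (2*π*a*Complex.I : ℂ) * (-(1:ℝ)/2 : ℝ) = -(↑π * ↑a : ℂ) * Complex.I := by
      push_cast; ring
    rw [h1, h2, Complex.exp_mul_I, Complex.exp_mul_I, Complex.cos_neg, Complex.sin_neg]
    have : (Complex.cos (↑π * ↑a) + Complex.sin (↑π * ↑a) * Complex.I -
        (Complex.cos (↑π * ↑a) + -Complex.sin (↑π * ↑a) * Complex.I)) / (2 * ↑π * ↑a * Complex.I)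
        = Complex.sin (↑π * ↑a) / (↑π * ↑a) := by
      rw [div_eq_div_iff hc hπa]; ring
    rw [this]
    simp only [_root_.sinc, if_neg ha]
    push_cast
    ring

lemma box_prod (n : ℕ) (f : Fin n → ℝ → ℂ) :
    (∫ ξ in (Set.univ.pi fun _ : Fin n => Set.Icc (-(1:ℝ)/2) (1/2)), ∏ j, f j (ξ j))
      = ∏ j, ∫ t in Set.Icc (-(1:ℝ)/2) (1/2), f j t := by
  have hbox : MeasurableSet (Set.univ.pi fun _ : Fin n => Set.Icc (-(1:ℝ)/2) (1/2)) :=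
    MeasurableSet.univ_pi fun _ => measurableSet_Icc
  rw [← integral_indicator hbox]
  have hpt : ∀ ξ : Fin n → ℝ,
      (Set.univ.pi fun _ : Fin n => Set.Icc (-(1:ℝ)/2) (1/2)).indicator
        (fun ξ => ∏ j, f j (ξ j)) ξ
      = ∏ j, (Set.Icc (-(1:ℝ)/2) (1/2)).indicator (f j) (ξ j) := by
    intro ξ
    by_cases h : ξ ∈ Set.univ.pi fun _ : Fin n => Set.Icc (-(1:ℝ)/2) (1/2)
    · rw [Set.indicator_of_mem h]
      refine Finset.prod_congr rfl fun j _ => ?_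
      rw [Set.indicator_of_mem (h j (Set.mem_univ j))]
    · rw [Set.indicator_of_notMem h]
      have h' : ¬ ∀ j, ξ j ∈ Set.Icc (-(1:ℝ)/2) (1/2) := fun hh => h (Set.mem_univ_pi.mpr hh)
      obtain ⟨j, hj⟩ := not_forall.1 h'
      exact (Finset.prod_eq_zero (Finset.mem_univ j)
        (by rw [Set.indicator_of_notMem hj])).symm
  simp_rw [hpt]
  rw [MeasureTheory.volume_pi, MeasureTheory.integral_fintype_prod_eq_prod
    (f := fun j t => (Set.Icc (-(1:ℝ)/2) (1/2)).indicator (f j) t)]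
  exact Finset.prod_congr rfl fun j _ => integral_indicator measurableSet_Icc

lemma norm_exp_neg2piI (r : ℝ) : ‖Complex.exp (-(2*(π:ℂ)*Complex.I) * (r:ℂ))‖ = 1 := by
  have h : (-(2*(π:ℂ)*Complex.I) * r) = ((-(2*π*r) : ℝ) : ℂ) * Complex.I := by push_cast; ring
  rw [h, Complex.norm_exp_ofReal_mul_I]

theorem stmt6 (n : ℕ) (η : SchwartzMap (Fin n → ℝ) ℂ) (y : Fin n → ℝ) :
    (∫ x : Fin n → ℝ,
        (η x * Matrix.det (Matrix.of fun i j : Fin n => (_root_.sinc (x i - x j) : ℂ)))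
          * Complex.exp (-(2 * π * Complex.I) * ∑ i, x i * y i))
      = ∑ σ : Equiv.Perm (Fin n),
          ((Equiv.Perm.sign σ : ℤ) : ℂ) *
            ∫ ξ in (Set.univ.pi fun _ : Fin n => Set.Icc (-(1:ℝ)/2) (1/2)),
              ∫ x : Fin n → ℝ,
                η x * Complex.exp (-(2 * π * Complex.I) *
                  ∑ i, x i * (y i - (ξ i - ξ (σ⁻¹ i)))) := by
  classical
  set box := Set.univ.pi fun _ : Fin n => Set.Icc (-(1:ℝ)/2) (1/2) with hboxdef
  have hboxm : MeasurableSet box := MeasurableSet.univ_pi fun _ => measurableSet_Icc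
  have hvol : volume box = 1 := by
    rw [hboxdef, volume_pi_pi]
    simp [Real.volume_Icc]
    norm_num
  haveI hfin : IsFiniteMeasure (volume.restrict box) :=
    ⟨by rw [Measure.restrict_apply_univ, hvol]; exact ENNReal.one_lt_top⟩
  -- the summand functions
  set G : Equiv.Perm (Fin n) → (Fin n → ℝ) → ℂ := fun σ x =>
    (η x * ∏ j, (_root_.sinc (x j - x (σ j)) : ℂ))
      * Complex.exp (-(2 * π * Complex.I) * ∑ i, x i * y i) with hGdef
  -- determinant expansion
  have hdet : ∀ x : Fin n → ℝ,
      Matrix.det (Matrix.of fun i j : Fin n => (_root_.sinc (x i - x j) : ℂ))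
        = ∑ σ : Equiv.Perm (Fin n),
          ((Equiv.Perm.sign σ : ℤ) : ℂ) * ∏ j, (_root_.sinc (x j - x (σ j)) : ℂ) := by
    intro x
    rw [Matrix.det_apply']
    apply Fintype.sum_equiv (Equiv.inv (Equiv.Perm (Fin n)))
    intro σ
    simp only [Equiv.inv_apply, Equiv.Perm.sign_inv, Matrix.of_apply]
    congr 1
    have := Equiv.prod_comp σ (fun j => (_root_.sinc (x j - x (σ⁻¹ j)) : ℂ))
    simp only [Equiv.Perm.inv_def, Equiv.symm_apply_apply] at this
    exact this
  -- norm facts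
  have hGnorm : ∀ (σ : Equiv.Perm (Fin n)) (x : Fin n → ℝ), ‖G σ x‖ ≤ ‖η x‖ := by
    intro σ x
    have hsum : (-(2 * (π:ℂ) * Complex.I) * ∑ i, (x i : ℂ) * (y i : ℂ))
        = -(2 * (π:ℂ) * Complex.I) * ((∑ i, x i * y i : ℝ) : ℂ) := by push_cast; ring
    rw [hGdef]
    simp only [norm_mul, hsum, norm_exp_neg2piI, mul_one]
    calc ‖η x‖ * ‖∏ j, ((_root_.sinc (x j - x (σ j)) : ℝ) : ℂ)‖
        ≤ ‖η x‖ * 1 := by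
          gcongr
          rw [← Complex.ofReal_prod, Complex.norm_real, Real.norm_eq_abs, Finset.abs_prod]
          exact Finset.prod_le_one (fun j _ => abs_nonneg _)
            (fun j _ => abs_sinc_le_one _)
      _ = ‖η x‖ := mul_one _
  have hGmeas : ∀ σ : Equiv.Perm (Fin n), AEStronglyMeasurable (G σ) volume := by
    intro σ
    refine Measurable.aestronglyMeasurable ?_
    refine Measurable.mul (Measurable.mul η.continuous.measurable ?_) ?_
    · exact Finset.measurable_prod _ fun j _ => Complex.measurable_ofReal.comp
        (measurable_sinc.comp ((measurable_pi_apply j).sub (measurable_pi_apply (σ j))))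
    · fun_prop
  have hGint : ∀ σ : Equiv.Perm (Fin n), Integrable (G σ) volume := fun σ =>
    Integrable.mono' η.integrable.norm (hGmeas σ) (ae_of_all _ (hGnorm σ))
  -- expand the determinant under the integral
  have hpt : (fun x : Fin n → ℝ =>
      (η x * Matrix.det (Matrix.of fun i j : Fin n => (_root_.sinc (x i - x j) : ℂ)))
        * Complex.exp (-(2 * π * Complex.I) * ∑ i, x i * y i))
      = fun x => ∑ σ : Equiv.Perm (Fin n), ((Equiv.Perm.sign σ : ℤ) : ℂ) * G σ x := by
    funext x
    rw [hdet x, Finset.mul_sum, Finset.sum_mul]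
    exact Finset.sum_congr rfl fun σ _ => by rw [hGdef]; ring
  rw [hpt, integral_finset_sum _ fun σ _ => (hGint σ).const_mul _]
  refine Finset.sum_congr rfl fun σ _ => ?_
  rw [integral_const_mul]
  congr 1
  -- now the per-permutation identity
  have hsum : ∀ (x ξ : Fin n → ℝ),
      (-(2 * (π:ℂ) * Complex.I) * ((∑ i, x i * (y i - (ξ i - ξ (σ⁻¹ i))) : ℝ) : ℂ))
      = (-(2 * (π:ℂ) * Complex.I) * ((∑ i, x i * y i : ℝ) : ℂ))
        + ∑ j, 2*(π:ℂ)*Complex.I*((x j - x (σ j) : ℝ):ℂ) * ((ξ j:ℂ)) := by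
    intro x ξ
    have e1 : ∑ i, ((x (σ i):ℂ)) * (ξ i:ℂ) = ∑ i, (x i:ℂ) * (ξ (σ⁻¹ i):ℂ) := by
      have := Equiv.sum_comp σ (fun i => (x i:ℂ) * (ξ (σ⁻¹ i):ℂ))
      simp only [Equiv.Perm.inv_def, Equiv.symm_apply_apply] at this
      exact this
    have e2 : ∑ i, (x i:ℂ) * ((y i:ℂ) - ((ξ i:ℂ) - (ξ (σ⁻¹ i):ℂ)))
        = ((∑ i, (x i:ℂ)*(y i:ℂ)) - (∑ i, (x i:ℂ)*(ξ i:ℂ))) + ∑ i, (x (σ i):ℂ)*(ξ i:ℂ) := by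
      rw [e1, ← Finset.sum_sub_distrib, ← Finset.sum_add_distrib]
      exact Finset.sum_congr rfl fun i _ => by ring
    have e3 : ∑ j, 2*(π:ℂ)*Complex.I*((x j:ℂ) - (x (σ j):ℂ)) * (ξ j:ℂ)
        = 2*(π:ℂ)*Complex.I*((∑ i, (x i:ℂ)*(ξ i:ℂ)) - ∑ i, (x (σ i):ℂ)*(ξ i:ℂ)) := by
      rw [mul_sub, Finset.mul_sum, Finset.mul_sum, ← Finset.sum_sub_distrib]
      exact Finset.sum_congr rfl fun i _ => by ring
    push_cast
    rw [e2, e3]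
    ring
  have hx : ∀ x : Fin n → ℝ,
      (∫ ξ in box, η x * Complex.exp (-(2 * (π:ℂ) * Complex.I) *
          ((∑ i, x i * (y i - (ξ i - ξ (σ⁻¹ i))) : ℝ) : ℂ))) = G σ x := by
    intro x
    have hptx : ∀ ξ : Fin n → ℝ,
        η x * Complex.exp (-(2 * (π:ℂ) * Complex.I) *
          ((∑ i, x i * (y i - (ξ i - ξ (σ⁻¹ i))) : ℝ) : ℂ))
        = (η x * Complex.exp (-(2 * (π:ℂ) * Complex.I) * ((∑ i, x i * y i : ℝ) : ℂ)))
          * ∏ j, Complex.exp (2*(π:ℂ)*Complex.I*((x j - x (σ j) : ℝ):ℂ) * ((ξ j:ℂ))) := by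
      intro ξ
      rw [hsum x ξ, Complex.exp_add, Complex.exp_sum]
      ring
    simp_rw [hptx]
    rw [integral_const_mul,
      box_prod n (fun j t => Complex.exp (2*(π:ℂ)*Complex.I*((x j - x (σ j) : ℝ):ℂ) * (t:ℂ)))]
    have hs : ∀ j, (∫ t in Set.Icc (-(1:ℝ)/2) (1/2),
        Complex.exp (2*(π:ℂ)*Complex.I*((x j - x (σ j) : ℝ):ℂ) * (t:ℂ)))
        = ((_root_.sinc (x j - x (σ j)) : ℝ) : ℂ) := fun j => sinc_integral _
    rw [Finset.prod_congr rfl fun j _ => hs j, hGdef]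
    ring
  have hnormF : ∀ (x ξ : Fin n → ℝ),
      ‖η x * Complex.exp (-(2 * (π:ℂ) * Complex.I) *
        ((∑ i, x i * (y i - (ξ i - ξ (σ⁻¹ i))) : ℝ) : ℂ))‖ = ‖η x‖ := by
    intro x ξ
    rw [norm_mul, norm_exp_neg2piI, mul_one]
  have hcont : Continuous (fun z : (Fin n → ℝ) × (Fin n → ℝ) =>
      η z.1 * Complex.exp (-(2 * (π:ℂ) * Complex.I) *
        ((∑ i, z.1 i * (y i - (z.2 i - z.2 (σ⁻¹ i))) : ℝ) : ℂ))) := by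
    refine Continuous.mul (η.continuous.comp continuous_fst) (Complex.continuous_exp.comp ?_)
    fun_prop
  have hFint : Integrable (Function.uncurry fun (x ξ : Fin n → ℝ) =>
      η x * Complex.exp (-(2 * (π:ℂ) * Complex.I) *
        ((∑ i, x i * (y i - (ξ i - ξ (σ⁻¹ i))) : ℝ) : ℂ)))
      (volume.prod (volume.restrict box)) := by
    refine (integrable_prod_iff hcont.aestronglyMeasurable).mpr ⟨?_, ?_⟩
    · refine ae_of_all _ fun x => ?_
      refine Integrable.mono' (integrable_const ‖η x‖) ?_ (ae_of_all _ fun ξ => ?_)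
      · exact Continuous.aestronglyMeasurable (by fun_prop)
      · exact le_of_eq (hnormF x ξ)
    · refine η.integrable.norm.congr (ae_of_all _ fun x => ?_)
      simp_rw [hnormF x]
      rw [integral_const, measureReal_def, Measure.restrict_apply_univ, hvol]
      simp
  refine Eq.trans ?_ (integral_integral_swap hFint)
  exact integral_congr_ae (ae_of_all _ fun x => (hx x).symm)
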